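/- For every absolutely summable sequence f = (f_j)_{j≥1} of complex numbers, the Hankel operator H(f) is a compact operator on ℓ². -/

import Mathlib

open Filter Finset Topology
open scoped ENNReal

noncomputable section

namespace HankelAux

abbrev EE := lp (fun _ : ℕ => ℂ) 2

/-- The coordinate functional on `ℓ²`. -/
def coord (j : ℕ) : EE →L[ℂ] ℂ :=
  LinearMap.mkContinuous
    { toFun := fun x => x j
      map_add' := fun x y => rfl
      map_smul' := fun c x => rfl }
    1 (fun x => by show ‖x j‖ ≤ 1 * ‖x‖; simpa using lp.norm_apply_le_norm (by norm_num) x j)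

@[simp] theorem coord_apply (j : ℕ) (x : EE) : coord j x = x j := rfl

theorem isCompactOperator_smulRight (φ : EE →L[ℂ] ℂ) (v : EE) :
    IsCompactOperator (φ.smulRight v) := by
  rw [isCompactOperator_iff_exists_mem_nhds_image_subset_compact]
  refine ⟨Metric.closedBall 0 1, Metric.closedBall_mem_nhds 0 one_pos,
    (fun c : ℂ => c • v) '' Metric.closedBall 0 ‖φ‖,
    (isCompact_closedBall 0 ‖φ‖).image (by continuity), ?_⟩
  rintro - ⟨x, hx, rfl⟩
  refine ⟨φ x, ?_, rfl⟩
  rw [Metric.mem_closedBall, dist_zero_right]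
  calc ‖φ x‖ ≤ ‖φ‖ * ‖x‖ := φ.le_opNorm x
    _ ≤ ‖φ‖ * 1 := by
        have : ‖x‖ ≤ 1 := by simpa [dist_zero_right] using hx
        exact mul_le_mul_of_nonneg_left this (norm_nonneg φ)
    _ = ‖φ‖ := mul_one _

theorem isCompactOperator_sum {ι : Type*} (s : Finset ι) (T : ι → EE →L[ℂ] EE)
    (h : ∀ i ∈ s, IsCompactOperator (T i)) :
    IsCompactOperator (∑ i ∈ s, T i : EE →L[ℂ] EE) := by
  classical
  induction s using Finset.induction_on with
  | empty => simpa using (isCompactOperator_zero : IsCompactOperator (0 : EE →ₗ[ℂ] EE))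
  | insert _ _ hni ih =>
    rename_i a s'
    rw [Finset.sum_insert hni]
    have h1 : IsCompactOperator (T a) := h a (Finset.mem_insert_self a s')
    have h2 : IsCompactOperator (∑ i ∈ s', T i : EE →L[ℂ] EE) :=
      ih fun i hi => h i (Finset.mem_insert_of_mem hi)
    simpa [ContinuousLinearMap.coe_add'] using h1.add h2

/-- The flip operator `Γ_k`, a finite-rank operator with matrix entries `[i + j = k]`. -/
def gamma (k : ℕ) : EE →L[ℂ] EE :=
  ∑ i ∈ Finset.range (k + 1), (coord (k - i)).smulRight (lp.single 2 i (1 : ℂ))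

theorem single_apply (j i : ℕ) :
    (lp.single 2 j (1 : ℂ) : EE) i = if i = j then 1 else 0 := by
  by_cases h : i = j
  · subst h; simp [lp.single_apply_self]
  · simp [lp.single_apply_ne 2 j _ h, h]

theorem gamma_apply (k : ℕ) (x : EE) (i : ℕ) :
    (gamma k x) i = if i ≤ k then x (k - i) else 0 := by
  have h1 : gamma k x = ∑ j ∈ Finset.range (k + 1), x (k - j) • lp.single 2 j (1 : ℂ) := by
    simp [gamma, ContinuousLinearMap.sum_apply, ContinuousLinearMap.smulRight_apply]
  calc (gamma k x) i = coord i (gamma k x) := rfl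
    _ = ∑ j ∈ Finset.range (k + 1), x (k - j) * (lp.single 2 j (1 : ℂ) : EE) i := by
        rw [h1, map_sum]
        refine Finset.sum_congr rfl fun j _ => ?_
        rw [map_smul]; rfl
    _ = ∑ j ∈ Finset.range (k + 1), (if i = j then x (k - j) else 0) := by
        refine Finset.sum_congr rfl fun j _ => ?_
        rw [single_apply]
        by_cases h : i = j <;> simp [h]
    _ = if i ∈ Finset.range (k + 1) then x (k - i) else 0 := Finset.sum_ite_eq _ _ _
    _ = if i ≤ k then x (k - i) else 0 := by simp only [Finset.mem_range, Nat.lt_succ_iff]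

theorem gamma_norm_apply_le (k : ℕ) (x : EE) : ‖gamma k x‖ ≤ ‖x‖ := by
  have h2 : (2 : ℝ≥0∞).toReal = 2 := by norm_num
  refine lp.norm_le_of_tsum_le (by rw [h2]; norm_num) (norm_nonneg x) ?_
  have hsupp : ∀ i ∉ Finset.range (k + 1),
      ‖(gamma k x) i‖ ^ (2 : ℝ≥0∞).toReal = 0 := by
    intro i hi
    rw [Finset.mem_range, Nat.lt_succ_iff] at hi
    rw [gamma_apply, if_neg hi]
    simp [h2]
  rw [tsum_eq_sum hsupp]
  calc ∑ i ∈ Finset.range (k + 1), ‖(gamma k x) i‖ ^ (2 : ℝ≥0∞).toReal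
      = ∑ i ∈ Finset.range (k + 1), ‖x (k - i)‖ ^ (2 : ℝ≥0∞).toReal := by
        refine Finset.sum_congr rfl fun i hi => ?_
        rw [Finset.mem_range, Nat.lt_succ_iff] at hi
        rw [gamma_apply, if_pos hi]
    _ = ∑ j ∈ Finset.range (k + 1), ‖x j‖ ^ (2 : ℝ≥0∞).toReal := by
        have := Finset.sum_range_reflect (fun j => ‖x j‖ ^ (2 : ℝ≥0∞).toReal) (k + 1)
        simpa using this
    _ ≤ ‖x‖ ^ (2 : ℝ≥0∞).toReal :=
        lp.sum_rpow_le_norm_rpow (by rw [h2]; norm_num) x (Finset.range (k + 1))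

theorem gamma_isCompactOperator (k : ℕ) : IsCompactOperator (gamma k) :=
  isCompactOperator_sum _ _ fun i _ => isCompactOperator_smulRight _ _

end HankelAux

open HankelAux

set_option maxHeartbeats 1000000 in
/-- For every absolutely summable sequence `f = (f_j)_{j ≥ 1}` of complex
numbers (here indexed by `ℕ`, with `f k` standing for `f_{k+1}`), the Hankel operator `H(f)`
on `ℓ²`, with entries `(H(f))_{i,j} = f_{i+j-1}` for `i, j ≥ 1`, is a compact operator. -/
theorem hankel_compact_on_l2
    (f : ℕ → ℂ) (hf : Summable fun k : ℕ => ‖f k‖)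
    (H : lp (fun _ : ℕ => ℂ) 2 →L[ℂ] lp (fun _ : ℕ => ℂ) 2)
    (hH : ∀ (x : lp (fun _ : ℕ => ℂ) 2) (i : ℕ),
        (H x) i = ∑' j : ℕ, f (i + j) * x j) :
    IsCompactOperator H := by
  classical
  -- truncated operators
  set T : ℕ → (EE →L[ℂ] EE) := fun N => ∑ k ∈ Finset.range N, f k • gamma k with hT
  have hTc : ∀ N, IsCompactOperator (T N) := by
    intro N
    refine isCompactOperator_sum _ _ fun k _ => ?_
    have := (gamma_isCompactOperator k).smul (f k)
    simpa [ContinuousLinearMap.coe_smul'] using this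
  -- summability of the coefficient sequence `c`
  have hc : ∀ (x : EE) (i : ℕ), Summable fun k => f k * (gamma k x) i := by
    intro x i
    refine Summable.of_norm_bounded (hf.mul_right ‖x‖) fun k => ?_
    rw [norm_mul]
    have h1 : ‖(gamma k x) i‖ ≤ ‖gamma k x‖ := lp.norm_apply_le_norm (by norm_num) _ i
    exact mul_le_mul_of_nonneg_left (h1.trans (gamma_norm_apply_le k x)) (norm_nonneg _)
  -- H in terms of the gammas, coordinatewise
  have hHx : ∀ (x : EE) (i : ℕ), (H x) i = ∑' k, f k * (gamma k x) i := by
    intro x i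
    rw [hH]
    have hinj : Function.Injective fun j : ℕ => i + j := add_right_injective i
    have hsupp : Function.support (fun k => f k * (gamma k x) i) ⊆
        Set.range fun j : ℕ => i + j := by
      intro k hk
      rcases le_or_gt i k with h | h
      · exact ⟨k - i, by show i + (k - i) = k; omega⟩
      · exact absurd (show f k * ((gamma k x : ∀ _ : ℕ, ℂ) i) = 0 by
          rw [gamma_apply, if_neg (by omega), mul_zero]) hk
    have := hinj.tsum_eq (f := fun k => f k * (gamma k x) i) hsupp
    rw [← this]
    refine tsum_congr fun j => ?_
    show f (i + j) * (x j : ℂ) = f (i + j) * ((gamma (i + j) x : ∀ _ : ℕ, ℂ) i)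
    rw [gamma_apply, if_pos (Nat.le_add_right i j), Nat.add_sub_cancel_left]
  -- norm estimate for H - T N
  have hbound : ∀ N, ‖H - T N‖ ≤ ∑' k, ‖f (k + N)‖ := by
    intro N
    have hCnn : (0 : ℝ) ≤ ∑' k, ‖f (k + N)‖ := tsum_nonneg fun k => norm_nonneg _
    refine ContinuousLinearMap.opNorm_le_bound _ hCnn fun x => ?_
    set u : ℕ → EE := fun m => f (m + N) • gamma (m + N) x with hu
    have hfN : Summable fun m => ‖f (m + N)‖ := (summable_nat_add_iff N).2 hf
    have hun : ∀ m, ‖u m‖ ≤ ‖f (m + N)‖ * ‖x‖ := by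
      intro m
      rw [hu, norm_smul]
      exact mul_le_mul_of_nonneg_left (gamma_norm_apply_le _ x) (norm_nonneg _)
    have husum : Summable u :=
      Summable.of_norm_bounded (hfN.mul_right ‖x‖) hun
    have key : (H - T N) x = ∑' m, u m := by
      apply lp.ext
      funext i
      have hrhs : (∑' m, u m : EE) i = ∑' m, f (m + N) * (gamma (m + N) x) i := by
        have := (coord i).map_tsum husum
        simpa [hu, coord_apply] using this
      have hTNx : (T N x) i = ∑ k ∈ Finset.range N, f k * (gamma k x) i := by
        have h1 : T N x = ∑ k ∈ Finset.range N, f k • gamma k x := by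
          simp [hT, ContinuousLinearMap.sum_apply]
        calc (T N x) i = coord i (T N x) := rfl
          _ = ∑ k ∈ Finset.range N, f k * (gamma k x) i := by
              rw [h1, map_sum]
              refine Finset.sum_congr rfl fun k _ => ?_
              rw [map_smul]; rfl
      have hsplit := Summable.sum_add_tsum_nat_add (f := fun k => f k * (gamma k x) i) N (hc x i)
      have : ((H - T N) x : ∀ _ : ℕ, ℂ) i = (H x : ∀ _ : ℕ, ℂ) i - (T N x : ∀ _ : ℕ, ℂ) i := by
        rw [ContinuousLinearMap.sub_apply, lp.coeFn_sub, Pi.sub_apply]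
      rw [this, hHx, hTNx, hrhs, ← hsplit]
      ring
    have hnorm : Summable fun m => ‖u m‖ :=
      Summable.of_nonneg_of_le (fun m => norm_nonneg _) hun (hfN.mul_right ‖x‖)
    rw [key]
    calc ‖(∑' m, u m : EE)‖ ≤ ∑' m, ‖u m‖ := norm_tsum_le_tsum_norm hnorm
      _ ≤ ∑' m, ‖f (m + N)‖ * ‖x‖ := Summable.tsum_le_tsum hun hnorm (hfN.mul_right ‖x‖)
      _ = (∑' m, ‖f (m + N)‖) * ‖x‖ := tsum_mul_right
  -- convergence T N → H
  have htend : Tendsto T atTop (𝓝 H) := by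
    rw [tendsto_iff_norm_sub_tendsto_zero]
    refine squeeze_zero (fun N => norm_nonneg _) (fun N => ?_)
      (tendsto_sum_nat_add fun k => ‖f k‖)
    rw [norm_sub_rev]
    exact hbound N
  exact isCompactOperator_of_tendsto htend (Eventually.of_forall hTc)
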